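/- Let $(\theta_1^\star, \ldots, \theta_N^\star) \in \Phi_K^N$ be a maximizer of $|g(\theta)| = |h_0 + \sum_{n=1}^N h_n e^{i\theta_n}|$ with $g^\star = g(\theta^\star) \neq 0$, and let $\mu = g^\star / |g^\star|$. Then for every $n \in \{1, \ldots, N\}$ and every $k \in \{1, \ldots, K\}$, we have $\mu \neq e^{i(\alpha_n + (k - 0.5)\omega)}$; that is, the optimal normalized total channel never coincides with any arc endpoint $s_{nk}$. -/

import Mathlib

open Real Complex

/-- Circular distance on ℝ / 2πℤ. -/
noncomputable def cdist (x y : ℝ) : ℝ := sInf (Set.range fun m : ℤ => |x - y + 2 * π * m|)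

/-- The discrete phase-shift set Φ_K = {ω, 2ω, …, Kω}, ω = 2π/K. -/
def Phi (K : ℕ) : Set ℝ := {θ | ∃ k : ℕ, 1 ≤ k ∧ k ≤ K ∧ θ = k * (2 * π / K)}

private lemma re_eq_abs_imp {z : ℂ} (hz : z.re = ‖z‖) : z = (‖z‖ : ℂ) := by
  have h1 := Complex.sq_norm z
  rw [Complex.normSq_apply] at h1
  have him : z.im * z.im = 0 := by rw [← hz] at h1; nlinarith
  have him0 : z.im = 0 := mul_self_eq_zero.mp him
  apply Complex.ext
  · simpa using hz
  · simpa using him0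

private lemma cos_half_le (K : ℕ) (hK : 2 ≤ K) (m : ℤ) :
    Real.cos (((m : ℝ) + 1/2) * (2 * π / K)) ≤ Real.cos (π / K) := by
  have hπ := Real.pi_pos
  have hK0 : (0:ℝ) < K := by exact_mod_cast Nat.lt_of_lt_of_le (by norm_num) hK
  have hKz : (K:ℤ) ≠ 0 := by positivity
  set r : ℤ := m % K with hr
  set q : ℤ := m / K with hq
  have hm : m = K * q + r := by rw [hr, hq]; exact (Int.mul_ediv_add_emod m K).symm
  have hr0 : (0:ℤ) ≤ r := Int.emod_nonneg m hKz
  have hrK : r < K := Int.emod_lt_of_pos m (by exact_mod_cast Nat.lt_of_lt_of_le (by norm_num) hK)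
  have hrw : ((m : ℝ) + 1/2) * (2 * π / K) = ((r:ℝ) + 1/2) * (2 * π / K) + q * (2*π) := by
    have : (m:ℝ) = (K:ℝ) * q + r := by exact_mod_cast congrArg (Int.cast : ℤ → ℝ) hm
    rw [this]
    field_simp
    ring
  rw [hrw, Real.cos_add_int_mul_two_pi]
  have h2πK : (0:ℝ) < 2 * π / K := by positivity
  have hr0' : (0:ℝ) ≤ (r:ℝ) := by exact_mod_cast hr0
  have hrK' : (r:ℝ) ≤ (K:ℝ) - 1 := by
    have : r + 1 ≤ (K:ℤ) := hrK
    have := (@Int.cast_le ℝ _ _ _).2 this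
    push_cast at this; linarith
  have hx1 : π / K ≤ ((r:ℝ) + 1/2) * (2 * π / K) := by
    have e : ((r:ℝ) + 1/2) * (2 * π / K) - π / K = (r:ℝ) * (2 * π / K) := by
      field_simp; ring
    nlinarith [mul_nonneg hr0' h2πK.le]
  have hx2 : ((r:ℝ) + 1/2) * (2 * π / K) ≤ 2 * π - π / K := by
    have e : 2 * π - π / K - ((r:ℝ) + 1/2) * (2 * π / K) = ((K:ℝ) - 1 - r) * (2 * π / K) := by
      field_simp; ring
    nlinarith [mul_nonneg (by linarith : (0:ℝ) ≤ (K:ℝ) - 1 - r) h2πK.le]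
  set x := ((r:ℝ) + 1/2) * (2 * π / K) with hx
  have hπK : π / K ≤ π := by
    rw [div_le_iff₀ hK0]; nlinarith
  rcases le_total x π with hxπ | hxπ
  · exact Real.cos_le_cos_of_nonneg_of_le_pi (by positivity) hxπ hx1
  · have : Real.cos x = Real.cos (2*π - x) := by rw [Real.cos_two_pi_sub]
    rw [this]
    exact Real.cos_le_cos_of_nonneg_of_le_pi (by positivity) (by linarith) (by linarith)

set_option maxHeartbeats 1000000 in
theorem stmt_5 (K N : ℕ) (hK : 2 ≤ K) (ω : ℝ) (hω : ω = 2 * π / K)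
    (β α : Fin (N + 1) → ℝ) (hβ : ∀ n, 0 < β n)
    (h : Fin (N + 1) → ℂ)
    (hh : ∀ n, h n = (β n : ℂ) * Complex.exp ((α n : ℂ) * Complex.I))
    (θs : Fin N → ℝ) (hθs : ∀ n, θs n ∈ Phi K)
    (hmax : ∀ θ : Fin N → ℝ, (∀ n, θ n ∈ Phi K) →
      ‖h 0 + ∑ n : Fin N, h n.succ * Complex.exp (θ n * Complex.I)‖
        ≤ ‖h 0 + ∑ n : Fin N, h n.succ * Complex.exp (θs n * Complex.I)‖)
    (g : ℂ) (hg : g = h 0 + ∑ n : Fin N, h n.succ * Complex.exp (θs n * Complex.I))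
    (hg0 : g ≠ 0) :
    ∀ n : Fin N, ∀ k : ℕ, 1 ≤ k → k ≤ K →
      g / ‖g‖ ≠ Complex.exp ((↑(α n.succ + ((k : ℝ) - 0.5) * ω)) * Complex.I) := by
  intro n k hk1 hkK hcontra
  have hπ := Real.pi_pos
  have hK0 : (0:ℝ) < K := by exact_mod_cast Nat.lt_of_lt_of_le (by norm_num) hK
  have hω0 : 0 < ω := by rw [hω]; positivity
  have hωπ : ω ≤ π := by
    rw [hω, div_le_iff₀ hK0]
    have : (2:ℝ) ≤ K := by exact_mod_cast hK
    nlinarith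
  have hgabs : (0:ℝ) < ‖g‖ := norm_pos_iff.mpr hg0
  set ψ : ℝ := α n.succ + ((k : ℝ) - 0.5) * ω with hψ
  have hgμ : g = (‖g‖ : ℂ) * Complex.exp ((ψ : ℂ) * Complex.I) := by
    rw [← hcontra]
    have hne : ((‖g‖ : ℝ) : ℂ) ≠ 0 := by
      exact_mod_cast hgabs.ne'
    field_simp
  -- c is the contribution of the other elements
  set c : ℂ := g - h n.succ * Complex.exp ((θs n : ℂ) * Complex.I) with hc
  have hgc : g = c + h n.succ * Complex.exp ((θs n : ℂ) * Complex.I) := by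
    rw [hc]; ring
  -- abs bound from optimality
  have hle : ∀ φ' : ℝ, φ' ∈ Phi K →
      ‖c + h n.succ * Complex.exp ((φ' : ℂ) * Complex.I)‖ ≤ ‖g‖ := by
    intro φ' hφ'
    have hmem : ∀ m : Fin N, (Function.update θs n φ') m ∈ Phi K := by
      intro m
      by_cases hm : m = n
      · subst hm; simpa using hφ'
      · rw [Function.update_of_ne hm]; exact hθs m
    have hbound := hmax (Function.update θs n φ') hmem
    have hsum : h 0 + ∑ m : Fin N, h m.succ * Complex.exp (((Function.update θs n φ') m : ℂ) * Complex.I)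
        = c + h n.succ * Complex.exp ((φ' : ℂ) * Complex.I) := by
      have e1 : ∑ m : Fin N, h m.succ * Complex.exp (((Function.update θs n φ') m : ℂ) * Complex.I)
          = ∑ m ∈ Finset.univ.erase n, h m.succ * Complex.exp (((Function.update θs n φ') m : ℂ) * Complex.I)
            + h n.succ * Complex.exp ((φ' : ℂ) * Complex.I) := by
        rw [← Finset.sum_erase_add _ _ (Finset.mem_univ n)]
        simp
      have e2 : ∑ m : Fin N, h m.succ * Complex.exp ((θs m : ℂ) * Complex.I)
          = ∑ m ∈ Finset.univ.erase n, h m.succ * Complex.exp ((θs m : ℂ) * Complex.I)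
            + h n.succ * Complex.exp ((θs n : ℂ) * Complex.I) := by
        rw [← Finset.sum_erase_add _ _ (Finset.mem_univ n)]
      have e3 : ∑ m ∈ Finset.univ.erase n, h m.succ * Complex.exp (((Function.update θs n φ') m : ℂ) * Complex.I)
          = ∑ m ∈ Finset.univ.erase n, h m.succ * Complex.exp ((θs m : ℂ) * Complex.I) := by
        apply Finset.sum_congr rfl
        intro m hm
        rw [Function.update_of_ne (Finset.ne_of_mem_erase hm)]
      rw [e1, e3, hc, hg, e2]
      ring
    rw [hsum] at hbound
    rw [hg]
    exact hbound
  -- real part computation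
  have hre : ∀ φ' : ℝ,
      (Complex.exp ((-ψ : ℂ) * Complex.I) * (c + h n.succ * Complex.exp ((φ' : ℂ) * Complex.I))).re
      = (Complex.exp ((-ψ : ℂ) * Complex.I) * c).re
        + β n.succ * Real.cos (φ' - ((k : ℝ) - 0.5) * ω) := by
    intro φ'
    rw [hh n.succ]
    have earg : (-ψ : ℂ) * Complex.I + ((α n.succ : ℂ) * Complex.I + (φ' : ℂ) * Complex.I)
        = (↑(φ' - ((k : ℝ) - 0.5) * ω) : ℂ) * Complex.I := by
      push_cast [hψ]; ring
    have e : Complex.exp ((-ψ : ℂ) * Complex.I) * ((β n.succ : ℂ) * Complex.exp ((α n.succ : ℂ) * Complex.I) * Complex.exp ((φ' : ℂ) * Complex.I))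
        = (β n.succ : ℂ) * Complex.exp ((↑(φ' - ((k : ℝ) - 0.5) * ω) : ℂ) * Complex.I) := by
      calc Complex.exp ((-ψ : ℂ) * Complex.I) * ((β n.succ : ℂ) * Complex.exp ((α n.succ : ℂ) * Complex.I) * Complex.exp ((φ' : ℂ) * Complex.I))
          = (β n.succ : ℂ) * (Complex.exp ((-ψ : ℂ) * Complex.I) * (Complex.exp ((α n.succ : ℂ) * Complex.I) * Complex.exp ((φ' : ℂ) * Complex.I))) := by ring
        _ = (β n.succ : ℂ) * Complex.exp ((↑(φ' - ((k : ℝ) - 0.5) * ω) : ℂ) * Complex.I) := by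
            rw [← Complex.exp_add, ← Complex.exp_add, earg]
    rw [mul_add, e, Complex.add_re, Complex.re_ofReal_mul, Complex.exp_ofReal_mul_I_re]
  -- |g| equals re of rotated g
  have hreg : (Complex.exp ((-ψ : ℂ) * Complex.I) * g).re = ‖g‖ := by
    conv_lhs => rw [hgμ]
    have e0 : (-ψ : ℂ) * Complex.I + (ψ : ℂ) * Complex.I = 0 := by ring
    rw [show Complex.exp ((-ψ : ℂ) * Complex.I) * ((‖g‖ : ℂ) * Complex.exp ((ψ : ℂ) * Complex.I))
        = (‖g‖ : ℂ) * (Complex.exp ((-ψ : ℂ) * Complex.I) * Complex.exp ((ψ : ℂ) * Complex.I)) from by ring,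
      ← Complex.exp_add, e0, Complex.exp_zero, mul_one, Complex.ofReal_re]
  have habsg : ‖g‖ = (Complex.exp ((-ψ : ℂ) * Complex.I) * c).re
      + β n.succ * Real.cos (θs n - ((k : ℝ) - 0.5) * ω) := by
    rw [← hre (θs n), ← hgc, hreg]
  -- the key equality lemma
  have key : ∀ φ' : ℝ, φ' ∈ Phi K →
      Real.cos (θs n - ((k : ℝ) - 0.5) * ω) ≤ Real.cos (φ' - ((k : ℝ) - 0.5) * ω) →
      Complex.exp ((φ' : ℂ) * Complex.I) = Complex.exp ((θs n : ℂ) * Complex.I) := by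
    intro φ' hφ' hcos
    set w : ℂ := c + h n.succ * Complex.exp ((φ' : ℂ) * Complex.I) with hw
    have habsz : ‖Complex.exp ((-ψ : ℂ) * Complex.I) * w‖ = ‖w‖ := by
      rw [norm_mul]
      have : ((-ψ : ℝ) : ℂ) = (-ψ : ℂ) := by push_cast; ring
      rw [← this, Complex.norm_exp_ofReal_mul_I, one_mul]
    have h1 : (Complex.exp ((-ψ : ℂ) * Complex.I) * w).re ≤ ‖w‖ := by
      calc (Complex.exp ((-ψ : ℂ) * Complex.I) * w).re
          ≤ ‖Complex.exp ((-ψ : ℂ) * Complex.I) * w‖ := Complex.re_le_norm _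
        _ = ‖w‖ := habsz
    have h2 : ‖w‖ ≤ ‖g‖ := hle φ' hφ'
    have h3 : ‖g‖ ≤ (Complex.exp ((-ψ : ℂ) * Complex.I) * w).re := by
      rw [habsg, hre φ']
      have := mul_le_mul_of_nonneg_left hcos (hβ n.succ).le
      linarith
    have habsw : ‖w‖ = ‖g‖ := le_antisymm h2 (h3.trans h1)
    have hreeq : (Complex.exp ((-ψ : ℂ) * Complex.I) * w).re
        = ‖Complex.exp ((-ψ : ℂ) * Complex.I) * w‖ := by
      rw [habsz]
      exact le_antisymm h1 (habsw ▸ h3)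
    have hz := re_eq_abs_imp hreeq
    rw [habsz, habsw] at hz
    -- hz : exp(-ψ I) * w = |g|
    have hwg : w = g := by
      have : w = Complex.exp ((ψ : ℂ) * Complex.I) * (Complex.exp ((-ψ : ℂ) * Complex.I) * w) := by
        rw [← mul_assoc, ← Complex.exp_add]
        have : (ψ : ℂ) * Complex.I + (-ψ : ℂ) * Complex.I = 0 := by ring
        rw [this, Complex.exp_zero, one_mul]
      calc w = Complex.exp ((ψ : ℂ) * Complex.I) * (Complex.exp ((-ψ : ℂ) * Complex.I) * w) := this
        _ = Complex.exp ((ψ : ℂ) * Complex.I) * (‖g‖ : ℂ) := by rw [hz]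
        _ = (‖g‖ : ℂ) * Complex.exp ((ψ : ℂ) * Complex.I) := mul_comm _ _
        _ = g := hgμ.symm
    have hcancel : h n.succ * Complex.exp ((φ' : ℂ) * Complex.I)
        = h n.succ * Complex.exp ((θs n : ℂ) * Complex.I) := by
      have := hwg
      rw [hw, hgc] at this
      linear_combination this
    have hne : h n.succ ≠ 0 := by
      rw [hh n.succ]
      exact mul_ne_zero (by exact_mod_cast (hβ n.succ).ne') (Complex.exp_ne_zero _)
    exact mul_left_cancel₀ hne hcancel
  -- cos bound for the optimum
  obtain ⟨j, hj1, hjK, hjθ⟩ := hθs n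
  have hcosθ : Real.cos (θs n - ((k : ℝ) - 0.5) * ω) ≤ Real.cos (π / K) := by
    obtain ⟨m, hm⟩ : ∃ m : ℤ, (m : ℝ) = (j : ℝ) - (k : ℝ) := ⟨(j : ℤ) - (k : ℤ), by push_cast; ring⟩
    have e : θs n - ((k : ℝ) - 0.5) * ω = ((m : ℝ) + 1/2) * (2 * π / K) := by
      rw [hjθ, hω, hm]; ring
    rw [e]
    exact cos_half_le K hK m
  -- candidate 1 : φ₁ = k ω
  have hmem1 : (k : ℝ) * ω ∈ Phi K := ⟨k, hk1, hkK, by rw [hω]⟩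
  have hcos1 : Real.cos ((k : ℝ) * ω - ((k : ℝ) - 0.5) * ω) = Real.cos (π / K) := by
    congr 1
    rw [hω]; ring
  have E1 : Complex.exp ((((k : ℝ) * ω : ℝ) : ℂ) * Complex.I) = Complex.exp ((θs n : ℂ) * Complex.I) := by
    exact key _ hmem1 (by rw [hcos1]; exact hcosθ)
  -- candidate 2 and endgame
  have hωnot : Complex.exp ((ω : ℂ) * Complex.I) ≠ 1 := by
    intro hone
    obtain ⟨m, hm⟩ := Complex.exp_eq_one_iff.mp hone
    have : (ω : ℂ) = ((2 * π * m : ℝ) : ℂ) := by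
      have hm' : (ω : ℂ) * Complex.I = ((2 * π * m : ℝ) : ℂ) * Complex.I := by
        rw [hm]; push_cast; ring
      exact mul_right_cancel₀ Complex.I_ne_zero hm'
    have hωm : ω = 2 * π * m := by exact_mod_cast this
    rcases le_or_gt (m : ℝ) 0 with hm0 | hm0
    · nlinarith
    · have : (1:ℝ) ≤ m := by exact_mod_cast hm0
      nlinarith
  rcases eq_or_lt_of_le hk1 with hk1' | hk2
  · -- k = 1 : φ₂ = K ω
    have hmemK : (K : ℝ) * ω ∈ Phi K := ⟨K, by omega, le_refl K, by rw [hω]⟩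
    have hcosK : Real.cos ((K : ℝ) * ω - ((k : ℝ) - 0.5) * ω) = Real.cos (π / K) := by
      have e : (K : ℝ) * ω - ((k : ℝ) - 0.5) * ω = 2 * π - π / K := by
        rw [hω, ← hk1']
        push_cast
        field_simp
        ring
      rw [e, Real.cos_two_pi_sub]
    have E2 : Complex.exp ((((K : ℝ) * ω : ℝ) : ℂ) * Complex.I) = Complex.exp ((θs n : ℂ) * Complex.I) :=
      key _ hmemK (by rw [hcosK]; exact hcosθ)
    have hKω1 : Complex.exp ((((K : ℝ) * ω : ℝ) : ℂ) * Complex.I) = 1 := by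
      have e : (((K : ℝ) * ω : ℝ) : ℂ) * Complex.I = 2 * π * Complex.I := by
        have hKc : (K : ℂ) ≠ 0 := by exact_mod_cast hK0.ne'
        rw [hω]
        push_cast
        field_simp
      rw [e, Complex.exp_two_pi_mul_I]
    apply hωnot
    have : Complex.exp ((((k : ℝ) * ω : ℝ) : ℂ) * Complex.I) = 1 := by rw [E1, ← E2, hKω1]
    rw [← hk1'] at this
    simpa using this
  · -- k ≥ 2 : φ₂ = (k-1) ω
    have hmem2 : ((k : ℝ) - 1) * ω ∈ Phi K := by
      refine ⟨k - 1, by omega, by omega, ?_⟩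
      rw [hω]
      congr 1
      have : (1:ℕ) ≤ k := hk1
      push_cast [Nat.cast_sub this]
      ring
    have hcos2 : Real.cos (((k : ℝ) - 1) * ω - ((k : ℝ) - 0.5) * ω) = Real.cos (π / K) := by
      have e : ((k : ℝ) - 1) * ω - ((k : ℝ) - 0.5) * ω = -(π / K) := by
        rw [hω]; ring
      rw [e, Real.cos_neg]
    have E2 : Complex.exp (((((k : ℝ) - 1) * ω : ℝ) : ℂ) * Complex.I) = Complex.exp ((θs n : ℂ) * Complex.I) :=
      key _ hmem2 (by rw [hcos2]; exact hcosθ)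
    apply hωnot
    have heq : Complex.exp ((((k : ℝ) * ω : ℝ) : ℂ) * Complex.I)
        = Complex.exp (((((k : ℝ) - 1) * ω : ℝ) : ℂ) * Complex.I) * Complex.exp ((ω : ℂ) * Complex.I) := by
      rw [← Complex.exp_add]
      congr 1
      push_cast
      ring
    rw [E1, ← E2] at heq
    have := mul_left_cancel₀ (Complex.exp_ne_zero _) (heq.symm.trans (mul_one _).symm)
    exact this.symm ▸ rfl
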